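/- If λ_1, λ_2 are independent standard half-Cauchy random variables and τ_1, τ_2 > 0, then the random variable W = τ_1²λ_1² + τ_2²λ_2² has density f_W(w) = (1/π)(τ_1√(w+τ_1²) + τ_2√(w+τ_2²)) / (√(w+τ_1²)√(w+τ_2²)(w+τ_1²+τ_2²)) on (0,∞). -/

import Mathlib

open MeasureTheory Real Set

lemma lintegral_image_deriv {s : Set ℝ} (hs : MeasurableSet s) {f f' : ℝ → ℝ}
    (hf' : ∀ x ∈ s, HasDerivWithinAt f (f' x) s x) (hf : InjOn f s) (G : ℝ → ENNReal) :
    ∫⁻ x in f '' s, G x = ∫⁻ x in s, ENNReal.ofReal |f' x| * G (f x) := by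
  simpa only [ContinuousLinearMap.det_toSpanSingleton] using
    lintegral_image_eq_lintegral_abs_det_fderiv_mul volume hs
      (fun x hx => (hf' x hx).hasFDerivWithinAt) hf G

lemma base_integral {A B : ℝ} (hA : 0 < A) (hB : 0 < B) :
    ∫ x in Ioi (0:ℝ), (A * x ^ 2 + B)⁻¹ = π / (2 * Real.sqrt (A * B)) := by
  have hb : 0 < Real.sqrt (A / B) := Real.sqrt_pos.2 (div_pos hA hB)
  have hbsq : Real.sqrt (A / B) ^ 2 = A / B := Real.sq_sqrt (div_pos hA hB).le
  have key : ∀ x : ℝ, (A * x ^ 2 + B)⁻¹ = B⁻¹ * ((Real.sqrt (A/B) * x) ^ 2 + 1)⁻¹ := by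
    intro x
    rw [mul_pow, hbsq, ← mul_inv]
    congr 1
    field_simp
  simp_rw [key]
  rw [MeasureTheory.integral_const_mul]
  have := integral_comp_mul_left_Ioi (fun y : ℝ => (y ^ 2 + 1)⁻¹) 0 hb
  simp only [mul_zero] at this
  rw [this]
  have h2 : ∫ x in Ioi (0:ℝ), (x ^ 2 + 1)⁻¹ = π / 2 := by
    have := @integral_Ioi_inv_one_add_sq 0
    simp only [Real.arctan_zero, sub_zero] at this
    rw [← this]
    congr 1; ext x; ring_nf
  rw [h2, smul_eq_mul, Real.sqrt_div hA.le, Real.sqrt_mul hA.le]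
  have hsA : 0 < Real.sqrt A := Real.sqrt_pos.2 hA
  have hsB : 0 < Real.sqrt B := Real.sqrt_pos.2 hB
  have hB' : Real.sqrt B * Real.sqrt B = B := Real.mul_self_sqrt hB.le
  field_simp
  linear_combination hB'

lemma arctan_image : Real.arctan '' Ioi (0:ℝ) = Ioo 0 (π/2) := by
  ext θ
  constructor
  · rintro ⟨x, hx, rfl⟩
    exact ⟨by simpa using Real.arctan_strictMono hx, Real.arctan_lt_pi_div_two x⟩
  · rintro ⟨h1, h2⟩
    refine ⟨Real.tan θ, ?_, ?_⟩
    · exact Real.tan_pos_of_pos_of_lt_pi_div_two h1 h2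
    · exact Real.arctan_tan (by linarith [Real.pi_pos]) h2

lemma image_integral_arctan (h : ℝ → ℝ) :
    ∫ θ in Ioo 0 (π/2), h θ = ∫ x in Ioi (0:ℝ), (1 + x ^ 2)⁻¹ * h (Real.arctan x) := by
  rw [← arctan_image,
    integral_image_eq_integral_abs_deriv_smul measurableSet_Ioi
      (fun x _ => (Real.hasDerivAt_arctan x).hasDerivWithinAt)
      (Real.arctan_injective.injOn) h]
  congr 1; ext x
  rw [smul_eq_mul, abs_of_pos (by positivity : (0:ℝ) < 1 / (1 + x ^ 2)), one_div]

lemma J1 {w τ : ℝ} (hw : 0 < w) (hτ : 0 < τ) :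
    ∫ θ in Ioo 0 (π/2), (w * Real.sin θ ^ 2 + τ ^ 2)⁻¹
      = π / (2 * (τ * Real.sqrt (w + τ ^ 2))) := by
  rw [image_integral_arctan]
  have key : ∀ x : ℝ, (1 + x ^ 2)⁻¹ * (w * Real.sin (Real.arctan x) ^ 2 + τ ^ 2)⁻¹
      = ((w + τ ^ 2) * x ^ 2 + τ ^ 2)⁻¹ := by
    intro x
    have h1 : (0:ℝ) < 1 + x ^ 2 := by positivity
    rw [Real.sin_arctan, div_pow, Real.sq_sqrt h1.le, ← mul_inv]
    congr 1
    field_simp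
    ring
  simp_rw [key]
  rw [base_integral (by positivity) (by positivity)]
  congr 1
  rw [Real.sqrt_mul (by positivity), Real.sqrt_sq hτ.le]
  ring

lemma J2 {w τ : ℝ} (hw : 0 < w) (hτ : 0 < τ) :
    ∫ θ in Ioo 0 (π/2), (w * Real.cos θ ^ 2 + τ ^ 2)⁻¹
      = π / (2 * (τ * Real.sqrt (w + τ ^ 2))) := by
  rw [image_integral_arctan]
  have key : ∀ x : ℝ, (1 + x ^ 2)⁻¹ * (w * Real.cos (Real.arctan x) ^ 2 + τ ^ 2)⁻¹
      = (τ ^ 2 * x ^ 2 + (w + τ ^ 2))⁻¹ := by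
    intro x
    have h1 : (0:ℝ) < 1 + x ^ 2 := by positivity
    rw [Real.cos_arctan, div_pow, Real.sq_sqrt h1.le, ← mul_inv]
    congr 1
    field_simp
    ring
  simp_rw [key]
  rw [base_integral (by positivity) (by positivity)]
  congr 1
  rw [Real.sqrt_mul (by positivity), Real.sqrt_sq hτ.le]


noncomputable def gd (c v : ℝ) : ℝ := (1 / π) * (c / (Real.sqrt v * (v + c ^ 2)))

noncomputable def fW (τ₁ τ₂ w : ℝ) : ℝ :=
  (1 / π) * (τ₁ * Real.sqrt (w + τ₁ ^ 2) + τ₂ * Real.sqrt (w + τ₂ ^ 2)) /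
    (Real.sqrt (w + τ₁ ^ 2) * Real.sqrt (w + τ₂ ^ 2) * (w + τ₁ ^ 2 + τ₂ ^ 2))

lemma sin_sq_image {w : ℝ} (hw : 0 < w) :
    (fun θ => w * Real.sin θ ^ 2) '' Ioo 0 (π/2) = Ioo 0 w := by
  ext u
  constructor
  · rintro ⟨θ, ⟨h1, h2⟩, rfl⟩
    have hs : 0 < Real.sin θ := Real.sin_pos_of_pos_of_lt_pi h1 (by linarith [Real.pi_pos])
    have hc : 0 < Real.cos θ := Real.cos_pos_of_mem_Ioo ⟨by linarith [Real.pi_pos], h2⟩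
    have hlt : Real.sin θ ^ 2 < 1 := by nlinarith [Real.sin_sq_add_cos_sq θ]
    refine ⟨by positivity, ?_⟩
    show w * Real.sin θ ^ 2 < w
    nlinarith
  · rintro ⟨h1, h2⟩
    have hd : 0 < u / w := div_pos h1 hw
    have hd1 : u / w < 1 := (div_lt_one hw).2 h2
    have hs1 : Real.sqrt (u / w) < 1 := by
      rw [show (1:ℝ) = Real.sqrt 1 by simp]
      exact Real.sqrt_lt_sqrt hd.le (by simpa using hd1)
    refine ⟨Real.arcsin (Real.sqrt (u / w)), ⟨?_, ?_⟩, ?_⟩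
    · exact Real.arcsin_pos.2 (Real.sqrt_pos.2 hd)
    · exact Real.arcsin_lt_pi_div_two.2 hs1
    · show w * Real.sin (Real.arcsin (Real.sqrt (u/w))) ^ 2 = u
      rw [Real.sin_arcsin (by linarith [Real.sqrt_nonneg (u/w)]) hs1.le, Real.sq_sqrt hd.le]
      field_simp

lemma sin_sq_injOn {w : ℝ} (hw : 0 < w) :
    InjOn (fun θ => w * Real.sin θ ^ 2) (Ioo 0 (π/2)) := by
  intro a ha b hb hab
  have hsa : 0 < Real.sin a := Real.sin_pos_of_pos_of_lt_pi ha.1 (by linarith [Real.pi_pos, ha.2])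
  have hsb : 0 < Real.sin b := Real.sin_pos_of_pos_of_lt_pi hb.1 (by linarith [Real.pi_pos, hb.2])
  have h2 : Real.sin a ^ 2 = Real.sin b ^ 2 := by
    have := hab; simp only at this
    nlinarith [this]
  have h3 : Real.sin a = Real.sin b := by nlinarith
  exact Real.injOn_sin ⟨by linarith [Real.pi_pos, ha.1], ha.2.le⟩
    ⟨by linarith [Real.pi_pos, hb.1], hb.2.le⟩ h3

lemma conv_eq {τ₁ τ₂ w : ℝ} (hτ₁ : 0 < τ₁) (hτ₂ : 0 < τ₂) (hw : 0 < w) :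
    ∫⁻ u in Ioo 0 w, ENNReal.ofReal (gd τ₁ u) * ENNReal.ofReal (gd τ₂ (w - u))
      = ENNReal.ofReal (fW τ₁ τ₂ w) := by
  have hS : MeasurableSet (Ioo 0 (π/2) : Set ℝ) := measurableSet_Ioo
  have hderiv : ∀ θ ∈ Ioo 0 (π/2), HasDerivWithinAt (fun θ => w * Real.sin θ ^ 2)
      (w * (2 * Real.sin θ * Real.cos θ)) (Ioo 0 (π/2)) θ := by
    intro θ _
    have h := ((Real.hasDerivAt_sin θ).pow 2).const_mul w
    simpa [mul_comm, mul_assoc, mul_left_comm, pow_one] using h.hasDerivWithinAt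
  rw [← sin_sq_image hw, lintegral_image_deriv hS hderiv (sin_sq_injOn hw)]
  have hcongr : ∀ θ ∈ Ioo 0 (π/2),
      ENNReal.ofReal |w * (2 * Real.sin θ * Real.cos θ)| *
        (ENNReal.ofReal (gd τ₁ (w * Real.sin θ ^ 2)) *
          ENNReal.ofReal (gd τ₂ (w - w * Real.sin θ ^ 2)))
      = ENNReal.ofReal ((2 * τ₁ * τ₂ / π ^ 2) *
          (((w * Real.sin θ ^ 2 + τ₁ ^ 2) * (w * Real.cos θ ^ 2 + τ₂ ^ 2))⁻¹)) := by
    intro θ ⟨h1, h2⟩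
    have hs : 0 < Real.sin θ := Real.sin_pos_of_pos_of_lt_pi h1 (by linarith [Real.pi_pos])
    have hc : 0 < Real.cos θ := Real.cos_pos_of_mem_Ioo ⟨by linarith [Real.pi_pos], h2⟩
    have hsw : 0 < Real.sqrt w := Real.sqrt_pos.2 hw
    have hcos : w - w * Real.sin θ ^ 2 = w * Real.cos θ ^ 2 := by
      nlinarith [Real.sin_sq_add_cos_sq θ]
    have hsq1 : Real.sqrt (w * Real.sin θ ^ 2) = Real.sqrt w * Real.sin θ := by
      rw [Real.sqrt_mul hw.le, Real.sqrt_sq hs.le]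
    have hsq2 : Real.sqrt (w * Real.cos θ ^ 2) = Real.sqrt w * Real.cos θ := by
      rw [Real.sqrt_mul hw.le, Real.sqrt_sq hc.le]
    have hww : Real.sqrt w * Real.sqrt w = w := Real.mul_self_sqrt hw.le
    have hg1 : 0 ≤ gd τ₁ (w * Real.sin θ ^ 2) := by
      rw [gd, hsq1]; positivity
    rw [← ENNReal.ofReal_mul hg1, ← ENNReal.ofReal_mul (abs_nonneg _)]
    congr 1
    rw [abs_of_pos (by positivity), gd, gd, hcos, hsq1, hsq2]
    have d1 : 0 < w * Real.sin θ ^ 2 + τ₁ ^ 2 := by positivity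
    have d2 : 0 < w * Real.cos θ ^ 2 + τ₂ ^ 2 := by positivity
    field_simp
    ring_nf
    rw [Real.sq_sqrt hw.le]
  rw [setLIntegral_congr_fun hS hcongr]
  have hcont : Continuous (fun θ : ℝ => (2 * τ₁ * τ₂ / π ^ 2) *
      (((w * Real.sin θ ^ 2 + τ₁ ^ 2) * (w * Real.cos θ ^ 2 + τ₂ ^ 2))⁻¹)) := by
    apply Continuous.mul continuous_const
    apply Continuous.inv₀
    · fun_prop
    · intro θ
      have : 0 < (w * Real.sin θ ^ 2 + τ₁ ^ 2) * (w * Real.cos θ ^ 2 + τ₂ ^ 2) := by positivity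
      exact this.ne'
  have hint : IntegrableOn (fun θ : ℝ => (2 * τ₁ * τ₂ / π ^ 2) *
      (((w * Real.sin θ ^ 2 + τ₁ ^ 2) * (w * Real.cos θ ^ 2 + τ₂ ^ 2))⁻¹)) (Ioo 0 (π/2)) := by
    exact (hcont.integrableOn_Icc (a := 0) (b := π/2)).mono_set Ioo_subset_Icc_self
  rw [← MeasureTheory.ofReal_integral_eq_lintegral_ofReal hint
    (Filter.Eventually.of_forall fun θ => by positivity)]
  congr 1
  have key : ∀ θ : ℝ, (2 * τ₁ * τ₂ / π ^ 2) *
      (((w * Real.sin θ ^ 2 + τ₁ ^ 2) * (w * Real.cos θ ^ 2 + τ₂ ^ 2))⁻¹)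
      = (2 * τ₁ * τ₂ / π ^ 2 * (w + τ₁ ^ 2 + τ₂ ^ 2)⁻¹) *
          ((w * Real.sin θ ^ 2 + τ₁ ^ 2)⁻¹ + (w * Real.cos θ ^ 2 + τ₂ ^ 2)⁻¹) := by
    intro θ
    have habc : (w * Real.sin θ ^ 2 + τ₁ ^ 2) + (w * Real.cos θ ^ 2 + τ₂ ^ 2)
        = w + τ₁ ^ 2 + τ₂ ^ 2 := by nlinarith [Real.sin_sq_add_cos_sq θ]
    have d1 : 0 < w * Real.sin θ ^ 2 + τ₁ ^ 2 := by positivity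
    have d2 : 0 < w * Real.cos θ ^ 2 + τ₂ ^ 2 := by positivity
    have d3 : 0 < w + τ₁ ^ 2 + τ₂ ^ 2 := by positivity
    field_simp
    linear_combination (-1 : ℝ) * habc
  simp_rw [key]
  rw [MeasureTheory.integral_const_mul, integral_add (f := fun θ => (w * Real.sin θ ^ 2 + τ₁ ^ 2)⁻¹)
    (g := fun θ => (w * Real.cos θ ^ 2 + τ₂ ^ 2)⁻¹) (μ := volume.restrict (Ioo 0 (π/2)))
    (by
      refine (Continuous.integrableOn_Icc (a := 0) (b := π/2) ?_).mono_set Ioo_subset_Icc_self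
      exact (by fun_prop : Continuous fun θ => w * Real.sin θ ^ 2 + τ₁ ^ 2).inv₀
        (fun θ => (by positivity : (0:ℝ) < w * Real.sin θ ^ 2 + τ₁ ^ 2).ne'))
    (by
      refine (Continuous.integrableOn_Icc (a := 0) (b := π/2) ?_).mono_set Ioo_subset_Icc_self
      exact (by fun_prop : Continuous fun θ => w * Real.cos θ ^ 2 + τ₂ ^ 2).inv₀
        (fun θ => (by positivity : (0:ℝ) < w * Real.cos θ ^ 2 + τ₂ ^ 2).ne')),
    J1 hw hτ₁, J2 hw hτ₂]
  have hS1 : 0 < Real.sqrt (w + τ₁ ^ 2) := Real.sqrt_pos.2 (by positivity)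
  have hS2 : 0 < Real.sqrt (w + τ₂ ^ 2) := Real.sqrt_pos.2 (by positivity)
  have e1 : Real.sqrt (w + τ₁ ^ 2) * Real.sqrt (w + τ₁ ^ 2) = w + τ₁ ^ 2 :=
    Real.mul_self_sqrt (by positivity)
  have e2 : Real.sqrt (w + τ₂ ^ 2) * Real.sqrt (w + τ₂ ^ 2) = w + τ₂ ^ 2 :=
    Real.mul_self_sqrt (by positivity)
  rw [fW]
  have d3 : 0 < w + τ₁ ^ 2 + τ₂ ^ 2 := by positivity
  field_simp
  ring_nf

lemma sqrt_div_image {c : ℝ} (hc : 0 < c) :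
    (fun v => Real.sqrt v / c) '' Ioi 0 = Ioi (0:ℝ) := by
  ext y
  constructor
  · rintro ⟨v, hv, rfl⟩
    exact div_pos (Real.sqrt_pos.2 hv) hc
  · intro hy
    have hy' : (0:ℝ) < y := hy
    refine ⟨c ^ 2 * y ^ 2, mem_Ioi.2 (mul_pos (pow_pos hc 2) (pow_pos hy' 2)), ?_⟩
    show Real.sqrt (c ^ 2 * y ^ 2) / c = y
    rw [show c ^ 2 * y ^ 2 = (c * y) ^ 2 by ring,
      Real.sqrt_sq (mul_nonneg hc.le hy'.le)]
    field_simp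

lemma sqrt_div_injOn {c : ℝ} (hc : 0 < c) :
    InjOn (fun v => Real.sqrt v / c) (Ioi 0) := by
  intro a ha b hb hab
  have : Real.sqrt a = Real.sqrt b := by
    have := hab
    simp only at this
    field_simp at this
    exact this
  calc a = Real.sqrt a ^ 2 := (Real.sq_sqrt (le_of_lt ha)).symm
    _ = Real.sqrt b ^ 2 := by rw [this]
    _ = b := Real.sq_sqrt (le_of_lt hb)

lemma sub1 {c : ℝ} (hc : 0 < c) (F : ℝ → ENNReal) :
    ∫⁻ y, ENNReal.ofReal (if 0 < y then (2 / π) * (1 + y ^ 2)⁻¹ else 0) * F (c ^ 2 * y ^ 2)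
      = ∫⁻ v in Ioi 0, ENNReal.ofReal (gd c v) * F v := by
  have h1 : ∀ y : ℝ, ENNReal.ofReal (if 0 < y then (2 / π) * (1 + y ^ 2)⁻¹ else 0)
        * F (c ^ 2 * y ^ 2)
      = (Ioi 0).indicator
          (fun y => ENNReal.ofReal ((2 / π) * (1 + y ^ 2)⁻¹) * F (c ^ 2 * y ^ 2)) y := by
    intro y
    by_cases h : 0 < y <;> simp [indicator, h]
  rw [lintegral_congr h1, lintegral_indicator measurableSet_Ioi]
  have hder : ∀ v ∈ Ioi (0:ℝ), HasDerivWithinAt (fun v => Real.sqrt v / c)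
      (1 / (2 * Real.sqrt v) / c) (Ioi 0) v := fun v hv =>
    ((Real.hasDerivAt_sqrt (ne_of_gt hv)).div_const c).hasDerivWithinAt
  conv_lhs => rw [show (Ioi (0:ℝ)) = (fun v => Real.sqrt v / c) '' Ioi 0
    from (sqrt_div_image hc).symm]
  rw [lintegral_image_deriv measurableSet_Ioi hder (sqrt_div_injOn hc)]
  apply setLIntegral_congr_fun measurableSet_Ioi
  intro v hv
  beta_reduce
  have hsv : 0 < Real.sqrt v := Real.sqrt_pos.2 hv
  have hv2 : c ^ 2 * (Real.sqrt v / c) ^ 2 = v := by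
    rw [div_pow, Real.sq_sqrt hv.le]
    field_simp
  rw [hv2, ← mul_assoc, ← ENNReal.ofReal_mul (abs_nonneg _)]
  congr 2
  have hpos : (0:ℝ) < 1 / (2 * Real.sqrt v) / c :=
    div_pos (div_pos one_pos (by linarith)) hc
  rw [abs_of_pos hpos, gd, div_pow, Real.sq_sqrt hv.le]
  have hvc : (0:ℝ) < v + c ^ 2 := add_pos hv (pow_pos hc 2)
  have hkey : 1 + v / c ^ 2 = (v + c ^ 2) / c ^ 2 := by field_simp; ring
  rw [hkey, inv_div]
  field_simp [hvc.ne', Real.pi_ne_zero, hsv.ne', hc.ne']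

lemma lint_translate {u : ℝ} (K : ℝ → ENNReal) (hK : Measurable K) :
    ∫⁻ v in Ioi (0:ℝ), K (u + v) = ∫⁻ w in Ioi u, K w := by
  have hpre : (fun v : ℝ => v + u) ⁻¹' Ioi u = Ioi 0 := by
    ext v; simp [mem_preimage]
  have hres : (volume : Measure ℝ).restrict (Ioi u)
      = Measure.map (fun v => v + u) (volume.restrict (Ioi 0)) := by
    rw [← hpre, ← Measure.restrict_map (measurable_add_const u) measurableSet_Ioi,
      map_add_right_eq_self]
  rw [hres, lintegral_map hK (measurable_add_const u)]
  simp_rw [add_comm]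

lemma measurable_gd (c : ℝ) : Measurable (gd c) := by
  unfold gd
  fun_prop

/-- If λ₁, λ₂ are independent standard half-Cauchy random
variables, then W = τ₁²λ₁² + τ₂²λ₂² has density
f_W(w) = (1/π)(τ₁√(w+τ₁²) + τ₂√(w+τ₂²)) / (√(w+τ₁²)√(w+τ₂²)(w+τ₁²+τ₂²))
on (0,∞). -/
theorem sum_of_squared_half_cauchys_density
    {Ω : Type*} [MeasurableSpace Ω] (P : Measure Ω) [IsProbabilityMeasure P]
    (τ₁ τ₂ : ℝ) (hτ₁ : 0 < τ₁) (hτ₂ : 0 < τ₂)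
    (l₁ l₂ : Ω → ℝ) (hm₁ : Measurable l₁) (hm₂ : Measurable l₂)
    (hindep : ProbabilityTheory.IndepFun l₁ l₂ P)
    (hlaw₁ : Measure.map l₁ P = volume.withDensity
      (fun x => ENNReal.ofReal (if 0 < x then (2 / π) * (1 + x ^ 2)⁻¹ else 0)))
    (hlaw₂ : Measure.map l₂ P = volume.withDensity
      (fun x => ENNReal.ofReal (if 0 < x then (2 / π) * (1 + x ^ 2)⁻¹ else 0))) :
    Measure.map (fun ω => τ₁ ^ 2 * (l₁ ω) ^ 2 + τ₂ ^ 2 * (l₂ ω) ^ 2) P =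
      volume.withDensity (fun w => ENNReal.ofReal
        (if 0 < w then
          (1 / π) * (τ₁ * Real.sqrt (w + τ₁ ^ 2) + τ₂ * Real.sqrt (w + τ₂ ^ 2)) /
            (Real.sqrt (w + τ₁ ^ 2) * Real.sqrt (w + τ₂ ^ 2) * (w + τ₁ ^ 2 + τ₂ ^ 2))
        else 0)) := by
  classical
  have hT : Measurable (fun p : ℝ × ℝ => τ₁ ^ 2 * p.1 ^ 2 + τ₂ ^ 2 * p.2 ^ 2) := by fun_prop
  have hmap : Measure.map (fun ω => τ₁ ^ 2 * (l₁ ω) ^ 2 + τ₂ ^ 2 * (l₂ ω) ^ 2) P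
      = Measure.map (fun p : ℝ × ℝ => τ₁ ^ 2 * p.1 ^ 2 + τ₂ ^ 2 * p.2 ^ 2)
          ((volume.withDensity (fun x => ENNReal.ofReal
              (if 0 < x then (2 / π) * (1 + x ^ 2)⁻¹ else 0))).prod
            (volume.withDensity (fun x => ENNReal.ofReal
              (if 0 < x then (2 / π) * (1 + x ^ 2)⁻¹ else 0)))) := by
    have h2 : ((volume.withDensity (fun x => ENNReal.ofReal
          (if 0 < x then (2 / π) * (1 + x ^ 2)⁻¹ else 0))).prod
        (volume.withDensity (fun x => ENNReal.ofReal
          (if 0 < x then (2 / π) * (1 + x ^ 2)⁻¹ else 0))))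
        = (Measure.map l₁ P).prod (Measure.map l₂ P) := by rw [hlaw₁, hlaw₂]
    rw [h2, ← (ProbabilityTheory.indepFun_iff_map_prod_eq_prod_map_map hm₁.aemeasurable
          hm₂.aemeasurable).mp hindep,
      Measure.map_map hT (hm₁.prodMk hm₂)]
    rfl
  rw [hmap]
  set φe : ℝ → ENNReal :=
    fun x => ENNReal.ofReal (if 0 < x then (2 / π) * (1 + x ^ 2)⁻¹ else 0) with hφe
  have hφm : Measurable φe := by
    have : φe = fun x =>
        ENNReal.ofReal ((Ioi 0).indicator (fun x => (2 / π) * (1 + x ^ 2)⁻¹) x) := by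
      funext x
      by_cases h : 0 < x <;> simp [hφe, indicator, h, mem_Ioi]
    rw [this]
    exact ENNReal.measurable_ofReal.comp ((by fun_prop : Measurable fun x : ℝ =>
      (2 / π) * (1 + x ^ 2)⁻¹).indicator measurableSet_Ioi)
  refine Measure.ext fun s hs => ?_
  set Is : ℝ → ENNReal := s.indicator 1 with hIs
  have hIsm : Measurable Is := measurable_one.indicator hs
  have hIsne : ∀ w, Is w ≠ ⊤ := fun w => by
    by_cases h : w ∈ s <;> simp [hIs, indicator, h]
  rw [Measure.map_apply hT hs, withDensity_apply _ hs]
  have hsm : MeasurableSet ((fun p : ℝ × ℝ => τ₁ ^ 2 * p.1 ^ 2 + τ₂ ^ 2 * p.2 ^ 2) ⁻¹' s) :=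
    hT hs
  rw [Measure.prod_apply hsm]
  have step1 : ∀ x : ℝ, (volume.withDensity φe)
        (Prod.mk x ⁻¹' ((fun p : ℝ × ℝ => τ₁ ^ 2 * p.1 ^ 2 + τ₂ ^ 2 * p.2 ^ 2) ⁻¹' s))
      = ∫⁻ y, φe y * Is (τ₁ ^ 2 * x ^ 2 + τ₂ ^ 2 * y ^ 2) := by
    intro x
    have hBm : MeasurableSet (Prod.mk x ⁻¹'
        ((fun p : ℝ × ℝ => τ₁ ^ 2 * p.1 ^ 2 + τ₂ ^ 2 * p.2 ^ 2) ⁻¹' s)) :=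
      measurable_prodMk_left hsm
    rw [withDensity_apply _ hBm, ← lintegral_indicator hBm]
    apply lintegral_congr
    intro y
    by_cases h : τ₁ ^ 2 * x ^ 2 + τ₂ ^ 2 * y ^ 2 ∈ s <;>
      simp [indicator, h, mem_preimage, hIs]
  simp_rw [step1]
  rw [lintegral_withDensity_eq_lintegral_mul volume hφm
    (Measurable.lintegral_prod_right'
      (f := fun p : ℝ × ℝ => φe p.2 * Is (τ₁ ^ 2 * p.1 ^ 2 + τ₂ ^ 2 * p.2 ^ 2))
      ((hφm.comp measurable_snd).mul (hIsm.comp (by fun_prop : Measurable fun p : ℝ × ℝ =>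
        τ₁ ^ 2 * p.1 ^ 2 + τ₂ ^ 2 * p.2 ^ 2))))]
  simp only [Pi.mul_apply]
  have step2 : ∀ x : ℝ, ∫⁻ y, φe y * Is (τ₁ ^ 2 * x ^ 2 + τ₂ ^ 2 * y ^ 2)
      = ∫⁻ v in Ioi 0, ENNReal.ofReal (gd τ₂ v) * Is (τ₁ ^ 2 * x ^ 2 + v) :=
    fun x => sub1 hτ₂ (fun v => Is (τ₁ ^ 2 * x ^ 2 + v))
  simp_rw [step2]
  have step3 : ∫⁻ x, φe x *
        (∫⁻ v in Ioi 0, ENNReal.ofReal (gd τ₂ v) * Is (τ₁ ^ 2 * x ^ 2 + v))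
      = ∫⁻ u in Ioi 0, ENNReal.ofReal (gd τ₁ u) *
        ∫⁻ v in Ioi 0, ENNReal.ofReal (gd τ₂ v) * Is (u + v) :=
    sub1 hτ₁ (fun u => ∫⁻ v in Ioi 0, ENNReal.ofReal (gd τ₂ v) * Is (u + v))
  rw [step3]
  have step4 : ∀ u : ℝ, ∫⁻ v in Ioi 0, ENNReal.ofReal (gd τ₂ v) * Is (u + v)
      = ∫⁻ w in Ioi u, ENNReal.ofReal (gd τ₂ (w - u)) * Is w := by
    intro u
    rw [← lint_translate (fun w => ENNReal.ofReal (gd τ₂ (w - u)) * Is w)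
      ((((measurable_gd τ₂).comp (measurable_sub_const u)).ennreal_ofReal).mul hIsm)]
    apply setLIntegral_congr_fun measurableSet_Ioi
    intro v hv
    simp [add_sub_cancel_left]
  simp_rw [step4]
  set k : ℝ → ℝ → ENNReal := fun u w =>
    if 0 < u ∧ u < w then
      ENNReal.ofReal (gd τ₁ u) * (ENNReal.ofReal (gd τ₂ (w - u)) * Is w)
    else 0 with hk
  have hkm : Measurable (fun p : ℝ × ℝ => k p.1 p.2) := by
    apply Measurable.ite
    · rw [Set.setOf_and]
      exact (measurableSet_lt measurable_const measurable_fst).inter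
        (measurableSet_lt measurable_fst measurable_snd)
    · exact (((measurable_gd τ₁).comp measurable_fst).ennreal_ofReal).mul
        ((((measurable_gd τ₂).comp (measurable_snd.sub measurable_fst)).ennreal_ofReal).mul
          (hIsm.comp measurable_snd))
    · exact measurable_const
  have hE : (∫⁻ u in Ioi 0, ENNReal.ofReal (gd τ₁ u) *
        ∫⁻ w in Ioi u, ENNReal.ofReal (gd τ₂ (w - u)) * Is w)
      = ∫⁻ u, ∫⁻ w, k u w := by
    rw [← lintegral_indicator measurableSet_Ioi]
    apply lintegral_congr
    intro u
    by_cases hu : 0 < u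
    · rw [indicator_of_mem (mem_Ioi.2 hu),
        ← lintegral_const_mul' _ _ ENNReal.ofReal_ne_top,
        ← lintegral_indicator measurableSet_Ioi]
      apply lintegral_congr
      intro w
      by_cases hw : u < w <;> simp [hk, indicator, hu, hw, mem_Ioi]
    · rw [indicator_of_notMem (by simpa [mem_Ioi] using hu)]
      symm
      have : ∀ w, k u w = 0 := fun w => by simp [hk, hu]
      simp [this]
  rw [hE, lintegral_lintegral_swap hkm.aemeasurable]
  have final : ∀ w : ℝ, (∫⁻ u, k u w)
      = (if 0 < w then ENNReal.ofReal (fW τ₁ τ₂ w) else 0) * Is w := by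
    intro w
    have hup : ∀ u, k u w = (Ioo 0 w).indicator
        (fun u => ENNReal.ofReal (gd τ₁ u) * ENNReal.ofReal (gd τ₂ (w - u))) u * Is w := by
      intro u
      by_cases h : 0 < u ∧ u < w
      · simp [hk, h, indicator, mem_Ioo, h.1, h.2, mul_assoc]
      · have h' : u ∉ Ioo 0 w := by simpa [mem_Ioo] using h
        simp [hk, h, h']
    simp_rw [hup]
    rw [lintegral_mul_const' _ _ (hIsne w), lintegral_indicator measurableSet_Ioo]
    congr 1
    by_cases hw : 0 < w
    · rw [if_pos hw, conv_eq hτ₁ hτ₂ hw]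
    · rw [if_neg hw, Ioo_eq_empty (by linarith : ¬ (0:ℝ) < w)]
      simp
  simp_rw [final]
  rw [← lintegral_indicator hs]
  apply lintegral_congr
  intro w
  by_cases hws : w ∈ s
  · by_cases hw : 0 < w <;> simp [indicator, hws, hIs, hw, fW]
  · simp [indicator, hws, hIs]
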